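/- arXiv:1403.6758 — 2 statements merged into one kernel-verified Lean document; each statement's English description precedes it below -/
import Mathlib

section
/- Let $T \geq 1$, let $F$ be a finite set, and for each $i \in F$ and $t \in \{1,\dots,T\}$ let $x_i^t \geq 0$ with $\sum_{i \in F} x_i^t = 1$ for all $t$, and let $z_i^t \geq 0$ satisfy $z_i^t \geq x_i^t - x_i^{t+1}$ for $1 \leq t < T$. Suppose $[a,b] \subseteq \{1,\dots,T\}$ is an interval with $a < b$ such that $\sum_{i \in F} \min_{a \leq u \leq b} x_i^u < 1/2$. Then $\sum_{t=a}^{b-1} \sum_{i \in F} z_i^t > 1/2$. -/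
open Finset

/-- Fact 2: if the sum of per-facility minima of the fractional assignment over an
interval `[a,b]` drops below `1/2`, then the LP switching variables over that interval
sum to more than `1/2`. -/
theorem fact_sum_z_gt_half
    {F : Type*} [Fintype F]
    (T : ℕ) (hT : 1 ≤ T)
    (x z : F → ℕ → ℝ)
    (hx0 : ∀ i, ∀ t ∈ Finset.Icc 1 T, 0 ≤ x i t)
    (hx1 : ∀ t ∈ Finset.Icc 1 T, ∑ i, x i t = 1)
    (hz0 : ∀ i, ∀ t ∈ Finset.Icc 1 T, 0 ≤ z i t)
    (hz : ∀ i, ∀ t, 1 ≤ t → t < T → x i t - x i (t + 1) ≤ z i t)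
    (a b : ℕ) (ha : 1 ≤ a) (hab : a < b) (hb : b ≤ T)
    (hmin : ∑ i, (Finset.Icc a b).inf' (Finset.nonempty_Icc.mpr hab.le) (x i) < 1 / 2) :
    1 / 2 < ∑ t ∈ Finset.Ico a b, ∑ i, z i t := by
  have key : ∀ i, x i a - (Finset.Icc a b).inf' (Finset.nonempty_Icc.mpr hab.le) (x i)
      ≤ ∑ t ∈ Finset.Ico a b, z i t := by
    intro i
    obtain ⟨u, hu, hmin_eq⟩ :=
      (Finset.Icc a b).exists_mem_eq_inf' (Finset.nonempty_Icc.mpr hab.le) (x i)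
    obtain ⟨hau, hub⟩ := Finset.mem_Icc.mp hu
    rw [hmin_eq]
    have tel : ∀ v, a ≤ v → x i a - x i v = ∑ t ∈ Finset.Ico a v, (x i t - x i (t + 1)) := by
      intro v hv
      induction v, hv using Nat.le_induction with
      | base => simp
      | succ n hn ih =>
        rw [Finset.sum_Ico_succ_top hn, ← ih]
        ring
    calc x i a - x i u = ∑ t ∈ Finset.Ico a u, (x i t - x i (t + 1)) := tel u hau
      _ ≤ ∑ t ∈ Finset.Ico a u, z i t := by
          apply Finset.sum_le_sum
          intro t ht
          obtain ⟨h1, h2⟩ := Finset.mem_Ico.mp ht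
          exact hz i t (le_trans ha h1) (lt_of_lt_of_le (lt_of_lt_of_le h2 hub) hb)
      _ ≤ ∑ t ∈ Finset.Ico a b, z i t := by
          apply Finset.sum_le_sum_of_subset_of_nonneg
          · exact Finset.Ico_subset_Ico le_rfl hub
          · intro t ht _
            obtain ⟨h1, h2⟩ := Finset.mem_Ico.mp ht
            exact hz0 i t (Finset.mem_Icc.mpr ⟨le_trans ha h1, le_of_lt (lt_of_lt_of_le h2 hb)⟩)
  have haT : a ∈ Finset.Icc 1 T := Finset.mem_Icc.mpr ⟨ha, le_trans hab.le hb⟩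
  have hsum : ∑ i, (x i a - (Finset.Icc a b).inf' (Finset.nonempty_Icc.mpr hab.le) (x i))
      ≤ ∑ i, ∑ t ∈ Finset.Ico a b, z i t := Finset.sum_le_sum fun i _ => key i
  rw [Finset.sum_sub_distrib, hx1 a haT] at hsum
  rw [Finset.sum_comm]
  linarith
end

section
/- Let $g \geq 0$ and consider a single client with LP variables as in Fact 2, partitioned greedily into $\ell$ intervals. Then $g \cdot (\ell - 1) \leq 2g \sum_{t=1}^{T-1} \sum_{i \in F} z_i^t$; i.e., the integral switching cost of changing facility only at interval boundaries is at most twice the LP switching cost of that client. -/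
open Finset

private lemma ciInf_eq_inf'_nat (s : Finset ℕ) (hs : s.Nonempty) (f : ℕ → ℝ) :
    (⨅ u : s, f u) = s.inf' hs f := by
  rw [Finset.inf'_eq_csInf_image, iInf]
  congr 1
  ext y
  simp

private lemma telescope_Ico (f : ℕ → ℝ) (a b : ℕ) (hab : a ≤ b) :
    ∑ t ∈ Finset.Ico a b, (f t - f (t + 1)) = f a - f b := by
  induction b, hab using Nat.le_induction with
  | base => simp
  | succ b hab ih =>
      rw [Finset.sum_Ico_succ_top hab, ih]
      ring

/-- Switching-cost bound: if time is partitioned greedily into `ℓ` intervals as in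
Algorithm 1, then the integral switching cost `g (ℓ - 1)` is at most twice the LP
switching cost of the client. -/
theorem switching_cost_bound
    {F : Type*} [Fintype F]
    (T : ℕ) (hT : 1 ≤ T)
    (g : ℝ) (hg : 0 ≤ g)
    (x z : F → ℕ → ℝ)
    (hx0 : ∀ i, ∀ t ∈ Finset.Icc 1 T, 0 ≤ x i t)
    (hx1 : ∀ t ∈ Finset.Icc 1 T, ∑ i, x i t = 1)
    (hz0 : ∀ i, ∀ t ∈ Finset.Icc 1 T, 0 ≤ z i t)
    (hz : ∀ i, ∀ t, 1 ≤ t → t < T → x i t - x i (t + 1) ≤ z i t)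
    (ℓ : ℕ) (hℓ : 1 ≤ ℓ) (τ : ℕ → ℕ)
    (hτ1 : τ 1 = 1) (hτend : τ (ℓ + 1) = T + 1)
    (hτmono : ∀ k ∈ Finset.Icc 1 ℓ, τ k < τ (k + 1))
    (hτgreedy : ∀ k ∈ Finset.Icc 1 ℓ,
      IsGreatest {t : ℕ | τ k < t ∧ t ≤ T + 1 ∧
          1 / 2 ≤ ∑ i, ⨅ u : (Finset.Ico (τ k) t), x i u}
        (τ (k + 1))) :
    g * ((ℓ - 1 : ℕ) : ℝ) ≤ 2 * g * ∑ t ∈ Finset.Ico 1 T, ∑ i, z i t := by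
  -- τ is monotone on [1, ℓ+1]
  have hmono : ∀ a b, 1 ≤ a → a ≤ b → b ≤ ℓ + 1 → τ a ≤ τ b := by
    intro a b ha hab hb
    induction b, hab using Nat.le_induction with
    | base => exact le_rfl
    | succ b hab ih =>
        exact (ih (by omega)).trans
          (hτmono b (Finset.mem_Icc.mpr ⟨by omega, by omega⟩)).le
  have hτle : ∀ k, 1 ≤ k → k ≤ ℓ + 1 → τ k ≤ T + 1 := fun k h1 h2 =>
    hτend ▸ hmono k (ℓ + 1) h1 h2 le_rfl
  have hτge : ∀ k, 1 ≤ k → k ≤ ℓ + 1 → 1 ≤ τ k := fun k h1 h2 =>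
    hτ1 ▸ hmono 1 k le_rfl h1 h2
  -- per-interval bound
  have key : ∀ k, 1 ≤ k → k + 1 ≤ ℓ →
      1 / 2 ≤ ∑ t ∈ Finset.Ico (τ k) (τ (k + 1)), ∑ i, z i t := by
    intro k hk1 hk2
    have hkmem : k ∈ Finset.Icc 1 ℓ := Finset.mem_Icc.mpr ⟨hk1, by omega⟩
    set a := τ k with ha
    set b := τ (k + 1) with hb
    have hab : a < b := hτmono k hkmem
    have ha1 : 1 ≤ a := hτge k hk1 (by omega)
    have hbT : b ≤ T := by
      have h1 : τ (k + 1) ≤ τ ℓ := hmono (k + 1) ℓ (by omega) hk2 (by omega)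
      have h2 : τ ℓ < τ (ℓ + 1) := hτmono ℓ (Finset.mem_Icc.mpr ⟨hℓ, le_rfl⟩)
      omega
    -- b+1 is not in the greedy set
    have hnot : ¬ (1 / 2 ≤ ∑ i, ⨅ u : (Finset.Ico a (b + 1)), x i (u : ℕ)) := by
      intro hcon
      have := (hτgreedy k hkmem).2 (show b + 1 ∈ {t : ℕ | τ k < t ∧ t ≤ T + 1 ∧
          1 / 2 ≤ ∑ i, ⨅ u : (Finset.Ico (τ k) t), x i u} from ⟨by omega, by omega, hcon⟩)
      omega
    have hslt : ∑ i, ⨅ u : (Finset.Ico a (b + 1)), x i (u : ℕ) < 1 / 2 := lt_of_not_ge hnot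
    have hsne : (Finset.Ico a (b + 1)).Nonempty := ⟨a, by simp; omega⟩
    -- attain the min at u i
    have hattain : ∀ i : F, ∃ u ∈ Finset.Ico a (b + 1),
        (⨅ v : (Finset.Ico a (b + 1)), x i (v : ℕ)) = x i u := by
      intro i
      obtain ⟨u, hu, hequ⟩ := Finset.exists_mem_eq_inf' hsne (x i)
      exact ⟨u, hu, by rw [ciInf_eq_inf'_nat _ hsne, hequ]⟩
    choose u hu hux using hattain
    -- for each i, the drop x i a - x i (u i) is bounded by the z-sum over the interval
    have hdrop : ∀ i : F, x i a - x i (u i) ≤ ∑ t ∈ Finset.Ico a b, z i t := by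
      intro i
      have hui := Finset.mem_Ico.mp (hu i)
      calc x i a - x i (u i)
          = ∑ t ∈ Finset.Ico a (u i), (x i t - x i (t + 1)) :=
            (telescope_Ico (x i) a (u i) hui.1).symm
        _ ≤ ∑ t ∈ Finset.Ico a (u i), z i t := by
            apply Finset.sum_le_sum
            intro t ht
            have ht' := Finset.mem_Ico.mp ht
            exact hz i t (by omega) (by omega)
        _ ≤ ∑ t ∈ Finset.Ico a b, z i t := by
            apply Finset.sum_le_sum_of_subset_of_nonneg
            · exact Finset.Ico_subset_Ico le_rfl (by omega)
            · intro t ht _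
              have ht' := Finset.mem_Ico.mp ht
              exact hz0 i t (Finset.mem_Icc.mpr ⟨by omega, by omega⟩)
    have hxa : ∑ i, x i a = 1 := hx1 a (Finset.mem_Icc.mpr ⟨ha1, by omega⟩)
    have hsum : 1 / 2 ≤ ∑ i, (x i a - x i (u i)) := by
      have : ∑ i, x i (u i) < 1 / 2 := by
        calc ∑ i, x i (u i) = ∑ i, ⨅ v : (Finset.Ico a (b + 1)), x i (v : ℕ) := by
              exact Finset.sum_congr rfl fun i _ => (hux i).symm
          _ < 1 / 2 := hslt
      rw [Finset.sum_sub_distrib, hxa]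
      linarith
    calc (1 : ℝ) / 2 ≤ ∑ i, (x i a - x i (u i)) := hsum
      _ ≤ ∑ i, ∑ t ∈ Finset.Ico a b, z i t := Finset.sum_le_sum fun i _ => hdrop i
      _ = ∑ t ∈ Finset.Ico a b, ∑ i, z i t := Finset.sum_comm
  -- sum the per-interval bounds
  have hchain : ∀ k, k ≤ ℓ →
      ∑ j ∈ Finset.Icc 1 k, ∑ t ∈ Finset.Ico (τ j) (τ (j + 1)), ∑ i, z i t
        = ∑ t ∈ Finset.Ico (τ 1) (τ (k + 1)), ∑ i, z i t := by
    intro k hk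
    induction k with
    | zero => simp
    | succ k ih =>
        rw [← Finset.sum_Ico_consecutive _ (hmono 1 (k + 1) le_rfl (by omega) (by omega))
            (hmono (k + 1) (k + 2) (by omega) (by omega) (by omega)),
          ← ih (by omega)]
        rw [show Finset.Icc 1 (k + 1) = insert (k + 1) (Finset.Icc 1 k) by
          ext t; simp only [Finset.mem_Icc, Finset.mem_insert]; omega]
        rw [Finset.sum_insert (by simp)]
        ring
  have hzpos : ∀ t ∈ Finset.Ico 1 T, 0 ≤ ∑ i, z i t := by
    intro t ht
    have ht' := Finset.mem_Ico.mp ht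
    exact Finset.sum_nonneg fun i _ => hz0 i t (Finset.mem_Icc.mpr ⟨ht'.1, by omega⟩)
  have hmain : ((ℓ - 1 : ℕ) : ℝ) / 2 ≤ ∑ t ∈ Finset.Ico 1 T, ∑ i, z i t := by
    have h1 : ((ℓ - 1 : ℕ) : ℝ) / 2
        ≤ ∑ j ∈ Finset.Icc 1 (ℓ - 1), ∑ t ∈ Finset.Ico (τ j) (τ (j + 1)), ∑ i, z i t := by
      have := Finset.card_nsmul_le_sum (Finset.Icc 1 (ℓ - 1))
        (fun j => ∑ t ∈ Finset.Ico (τ j) (τ (j + 1)), ∑ i, z i t) (1 / 2)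
        (fun j hj => by
          have hj' := Finset.mem_Icc.mp hj
          exact key j hj'.1 (by omega))
      simpa [Nat.card_Icc, nsmul_eq_mul, mul_comm, div_eq_mul_inv] using this
    have h2 := hchain (ℓ - 1) (by omega)
    rw [h2] at h1
    refine h1.trans ?_
    rw [hτ1]
    apply Finset.sum_le_sum_of_subset_of_nonneg
    · apply Finset.Ico_subset_Ico le_rfl
      have h3 : τ (ℓ - 1 + 1) ≤ T := by
        have := hτmono ℓ (Finset.mem_Icc.mpr ⟨hℓ, le_rfl⟩)
        have h4 : τ (ℓ - 1 + 1) ≤ τ ℓ := hmono (ℓ - 1 + 1) ℓ (by omega) (by omega) (by omega)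
        omega
      omega
    · intro t ht _
      exact hzpos t ht
  have htotal : 0 ≤ ∑ t ∈ Finset.Ico 1 T, ∑ i, z i t :=
    le_trans (by positivity) hmain
  nlinarith [hmain, mul_le_mul_of_nonneg_left hmain hg]
end
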